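/- Over a field of characteristic zero, suppose u and v satisfy v^2 + uv + v = u^3 + u^2 - 10u - 10 and u ≠ -1. Set G = (uv - u^2 - 9u - 8)/(u + 1) and t = G + 125/G (assuming G ≠ 0). Then t(u+1)G = (u+1)G^2 + 125(u+1), i.e., the algebraic identity (uv - u^2 - 9u - 8)^2 - t(u+1)(uv - u^2 - 9u - 8) + 125(u+1)^2 = 0 holds, where t = (189 + 205u + 7u^2 + u^3 + u^4 - 16uv - 3u^2 v)/(uv - u^2 - 9u - 8). -/

import Mathlib

theorem t_formula_on_X015 (K : Type*) [Field K] [CharZero K] (u v t : K)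
    (hcurve : v^2 + u*v + v = u^3 + u^2 - 10*u - 10)
    (hu : u ≠ -1)
    (hG : u*v - u^2 - 9*u - 8 ≠ 0)
    (ht : t = (189 + 205*u + 7*u^2 + u^3 + u^4 - 16*u*v - 3*u^2*v)
        / (u*v - u^2 - 9*u - 8)) :
    (u*v - u^2 - 9*u - 8)^2 - t*(u + 1)*(u*v - u^2 - 9*u - 8) + 125*(u + 1)^2 = 0 := by
  subst ht
  rw [div_mul_eq_mul_div, div_mul_cancel₀ _ hG]
  linear_combination (u^2) * hcurve
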